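/- Let d ≥ 1 and let S, Φ ∈ ℂ^{d×d} be Hermitian positive semidefinite matrices. Then I + Φ is invertible and det(I + S·(I + Φ)^{-1}) ≥ det(I + S)/(1 + tr(Φ)/d)^d, where all three quantities are positive real numbers. -/

import Mathlib

open Matrix ComplexOrder

section Helpers

variable {n : Type*} [Fintype n] [DecidableEq n]

private lemma herm_det_one_add {C : Matrix n n ℂ} (hC : C.IsHermitian) :
    (1 + C).det = ((∏ i, (1 + hC.eigenvalues i) : ℝ) : ℂ) := by
  set U : Matrix n n ℂ := (hC.eigenvectorUnitary : Matrix n n ℂ) with hUdef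
  have hU : U * star U = 1 := Matrix.mem_unitaryGroup_iff.mp hC.eigenvectorUnitary.2
  have key : 1 + C = U * (1 + diagonal (RCLike.ofReal ∘ hC.eigenvalues)) * star U := by
    conv_lhs => rw [hC.spectral_theorem, Unitary.conjStarAlgAut_apply]
    rw [mul_add, mul_one, add_mul, hU]
  rw [key, det_mul_right_comm, hU, one_mul]
  have : (1 : Matrix n n ℂ) + diagonal (RCLike.ofReal ∘ hC.eigenvalues)
      = diagonal (fun i => 1 + (hC.eigenvalues i : ℂ)) := by
    rw [← diagonal_one, diagonal_add]
    rfl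
  rw [this, det_diagonal]
  push_cast
  rfl

private lemma herm_trace_eq {C : Matrix n n ℂ} (hC : C.IsHermitian) :
    C.trace = ((∑ i, hC.eigenvalues i : ℝ) : ℂ) := by
  conv_lhs => rw [hC.spectral_theorem, Unitary.conjStarAlgAut_apply]
  rw [trace_mul_cycle, Matrix.mem_unitaryGroup_iff'.mp hC.eigenvectorUnitary.2, one_mul,
    trace_diagonal]
  push_cast
  rfl

/-- det(1+C) for PSD C is a real number ≥ 1. -/
private lemma psd_det_one_add {C : Matrix n n ℂ} (hC : C.PosSemidef) :
    ∃ p : ℝ, 1 ≤ p ∧ (1 + C).det = (p : ℂ) := by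
  refine ⟨∏ i, (1 + hC.1.eigenvalues i), ?_, herm_det_one_add hC.1⟩
  calc (1:ℝ) = ∏ _i : n, 1 := by simp
    _ ≤ ∏ i, (1 + hC.1.eigenvalues i) := by
        refine Finset.prod_le_prod (fun i _ => zero_le_one) (fun i _ => ?_)
        linarith [hC.eigenvalues_nonneg i]

open scoped MatrixOrder in
private lemma det_re_le_det_add_re {A B : Matrix n n ℂ} (hA : A.PosDef) (hB : B.PosSemidef) :
    A.det.re ≤ (A + B).det.re := by
  set Q := CFC.sqrt A with hQdef
  have hQ : Q.PosSemidef := (CFC.sqrt_nonneg A).posSemidef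
  have hQQ : Q * Q = A := CFC.sqrt_mul_sqrt_self A hA.posSemidef.nonneg
  have hdet : Q.det * Q.det = A.det := by rw [← det_mul, hQQ]
  have hAdet : A.det ≠ 0 := hA.det_pos.ne'
  have hQd : Q.det ≠ 0 := by
    intro h; rw [h, zero_mul] at hdet; exact hAdet hdet.symm
  have hQi1 : Q * Q⁻¹ = 1 := mul_nonsing_inv Q (isUnit_iff_ne_zero.mpr hQd)
  have hQi2 : Q⁻¹ * Q = 1 := nonsing_inv_mul Q (isUnit_iff_ne_zero.mpr hQd)
  set M := Q⁻¹ * B * Q⁻¹ with hMdef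
  have hM : M.PosSemidef := by
    have h := hB.conjTranspose_mul_mul_same Q⁻¹
    rwa [conjTranspose_nonsing_inv, hQ.1.eq] at h
  have key : A + B = Q * (1 + M) * Q := by
    rw [mul_add, mul_one, add_mul, hQQ, hMdef]
    congr 1
    simp only [← Matrix.mul_assoc]
    rw [hQi1, one_mul, Matrix.mul_assoc, hQi2, mul_one]
  obtain ⟨p, hp, hdet1M⟩ := psd_det_one_add hM
  have h0 : 0 < A.det.re ∧ A.det.im = 0 := by
    have := hA.det_pos
    rw [Complex.lt_def] at this
    exact ⟨by simpa using this.1, by simpa using this.2.symm⟩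
  have : (A + B).det = A.det * p := by
    rw [key, det_mul, det_mul, hdet1M, ← hdet]
    ring
  rw [this]
  have hre : (A.det * (p:ℂ)).re = A.det.re * p := by
    simp [Complex.mul_re]
  rw [hre]
  nlinarith [h0.1]

private lemma amgm_one_add {d : ℕ} (hd : 1 ≤ d) (lam : Fin d → ℝ) (h : ∀ i, 0 ≤ lam i) :
    ∏ i, (1 + lam i) ≤ (1 + (∑ i, lam i) / d) ^ d := by
  have hd0 : (0:ℝ) < d := by exact_mod_cast Nat.lt_of_lt_of_le Nat.zero_lt_one hd
  have hw : ∀ i ∈ (Finset.univ : Finset (Fin d)), (0:ℝ) ≤ (d:ℝ)⁻¹ :=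
    fun i _ => by positivity
  have hw' : ∑ _i : Fin d, (d:ℝ)⁻¹ = 1 := by
    rw [Finset.sum_const, Finset.card_univ, Fintype.card_fin, nsmul_eq_mul]
    field_simp
  have hz : ∀ i ∈ (Finset.univ : Finset (Fin d)), (0:ℝ) ≤ 1 + lam i :=
    fun i _ => by linarith [h i]
  have key := Real.geom_mean_le_arith_mean_weighted Finset.univ
    (fun _ => (d:ℝ)⁻¹) (fun i => 1 + lam i) hw hw' hz
  have hL : ∏ i, (1 + lam i) ^ ((d:ℝ)⁻¹) = (∏ i, (1 + lam i)) ^ ((d:ℝ)⁻¹) :=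
    Real.finset_prod_rpow Finset.univ _ hz _
  have hR : ∑ i : Fin d, (d:ℝ)⁻¹ * (1 + lam i) = 1 + (∑ i, lam i) / d := by
    rw [← Finset.mul_sum, Finset.sum_add_distrib, Finset.sum_const, Finset.card_univ,
      Fintype.card_fin, nsmul_eq_mul, mul_one]
    field_simp
  simp only [hL, hR] at key
  have hP : (0:ℝ) ≤ ∏ i, (1 + lam i) := Finset.prod_nonneg hz
  have hRnn : (0:ℝ) ≤ 1 + (∑ i, lam i) / d := by
    have : 0 ≤ ∑ i, lam i := Finset.sum_nonneg fun i _ => h i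
    positivity
  have h2 := Real.rpow_le_rpow (Real.rpow_nonneg hP _) key (le_of_lt hd0)
  rwa [← Real.rpow_mul hP, inv_mul_cancel₀ (ne_of_gt hd0), Real.rpow_one,
    Real.rpow_natCast] at h2

end Helpers

/-- Combined deterministic core of Lemma 6 of the paper: for Hermitian positive
semidefinite `S, Φ ∈ ℂ^{d×d}`, the matrix `I + Φ` is invertible and
`det (I + S (I + Φ)⁻¹) ≥ det (I + S) / (1 + tr Φ / d) ^ d`, all quantities
being positive reals. -/
theorem rate_loss_trace_bound
    (d : ℕ) (hd : 1 ≤ d) (S Φ : Matrix (Fin d) (Fin d) ℂ)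
    (hS : S.PosSemidef) (hΦ : Φ.PosSemidef) :
    IsUnit (1 + Φ) ∧
    (0 < (1 + S).det.re ∧ (1 + S).det.im = 0) ∧
    (0 < (1 + S * (1 + Φ)⁻¹).det.re ∧ (1 + S * (1 + Φ)⁻¹).det.im = 0) ∧
    (1 + S).det.re / (1 + Φ.trace.re / d) ^ d ≤ (1 + S * (1 + Φ)⁻¹).det.re := by
  have hP : (1 + Φ).PosDef := Matrix.PosDef.one.add_posSemidef hΦ
  have hT : (1 + S).PosDef := Matrix.PosDef.one.add_posSemidef hS
  have hPS : ((1 + Φ) + S).PosDef := hP.add_posSemidef hS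
  have hPunit : IsUnit (1 + Φ) := hP.isUnit
  -- real forms
  have hTdet := hT.det_pos
  rw [Complex.lt_def] at hTdet
  have ha0 : 0 < (1 + S).det.re := by simpa using hTdet.1
  have haim : (1 + S).det.im = 0 := by simpa using hTdet.2.symm
  set a : ℝ := (1 + S).det.re with hadef
  have haC : (1 + S).det = (a : ℂ) := Complex.ext (by simp [hadef]) (by simp [haim])
  have hPSdet := hPS.det_pos
  rw [Complex.lt_def] at hPSdet
  have hb0 : 0 < ((1 + Φ) + S).det.re := by simpa using hPSdet.1
  have hbim : ((1 + Φ) + S).det.im = 0 := by simpa using hPSdet.2.symm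
  set b : ℝ := ((1 + Φ) + S).det.re with hbdef
  have hbC : ((1 + Φ) + S).det = (b : ℂ) := Complex.ext (by simp [hbdef]) (by simp [hbim])
  obtain ⟨c, hc1, hcC⟩ := psd_det_one_add hΦ
  have hc0 : (0:ℝ) < c := lt_of_lt_of_le zero_lt_one hc1
  -- trace is real and nonneg
  have htr : Φ.trace = ((∑ i, hΦ.1.eigenvalues i : ℝ) : ℂ) := herm_trace_eq hΦ.1
  set t : ℝ := Φ.trace.re with htdef
  have ht : t = ∑ i, hΦ.1.eigenvalues i := by rw [htdef, htr, Complex.ofReal_re]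
  have ht0 : 0 ≤ t := by
    rw [ht]; exact Finset.sum_nonneg fun i _ => hΦ.eigenvalues_nonneg i
  -- bound on c
  have hcbound : c ≤ (1 + t / d) ^ d := by
    have := amgm_one_add hd hΦ.1.eigenvalues (fun i => hΦ.eigenvalues_nonneg i)
    rw [← ht] at this
    have hcval : c = ∏ i, (1 + hΦ.1.eigenvalues i) := by
      have := herm_det_one_add hΦ.1
      rw [hcC] at this
      exact_mod_cast this
    rw [hcval]
    exact this
  -- a ≤ b
  have hab : a ≤ b := by
    have := det_re_le_det_add_re hT hΦ
    have hcomm : (1 + S) + Φ = (1 + Φ) + S := by abel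
    rw [hcomm] at this
    exact this
  -- the quotient matrix
  have hinv : (1 + Φ) * (1 + Φ)⁻¹ = 1 := mul_nonsing_inv _ (isUnit_iff_isUnit_det _ |>.mp hPunit)
  have hfact : 1 + S * (1 + Φ)⁻¹ = ((1 + Φ) + S) * (1 + Φ)⁻¹ := by
    rw [add_mul, hinv]
  have hdetinv : (1 + Φ)⁻¹.det = ((c:ℂ))⁻¹ := by
    rw [det_nonsing_inv, hcC]
    simp [Ring.inverse_eq_inv]
  have hdetq : (1 + S * (1 + Φ)⁻¹).det = ((b / c : ℝ) : ℂ) := by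
    rw [hfact, det_mul, hbC, hdetinv]
    push_cast
    ring
  have hq0 : 0 < b / c := div_pos hb0 hc0
  refine ⟨hPunit, ⟨ha0, haim⟩, ⟨by rw [hdetq]; simpa using hq0, by rw [hdetq]; simp⟩, ?_⟩
  rw [hdetq]
  simp only [Complex.ofReal_re]
  calc a / (1 + t / d) ^ d ≤ a / c := by
        apply div_le_div_of_nonneg_left (le_of_lt ha0) hc0 hcbound
    _ ≤ b / c := by
        exact (div_le_div_iff_of_pos_right hc0).mpr hab
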